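/- For all integers b ≥ 2 and j ≥ 1: x_{2b−1,j} is divisible by 5^(5b − 6 + max(0, ⌊(5j − 7)/2⌋)), and x_{2b,j} is divisible by 5^(5b − 4 + ⌊(5j − 5)/2⌋). -/

import Mathlib

/-- The matrix `(m_{i,j})` of Theorem 3.1 (powers of 5): rows `0 ≤ i ≤ 4` are given
explicitly, and for `i ≥ 5`, `m_{i,0} = 0` while for `j ≥ 1`,
`m_{i,j} = 25 m_{i−1,j−1} + 25 m_{i−2,j−1} + 15 m_{i−3,j−1} + 5 m_{i−4,j−1} + m_{i−5,j−1}`. -/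
def mMat : ℕ → ℕ → ℤ
  | 0, 0 => 1
  | 1, 1 => 5 ^ 3
  | 2, 1 => 4 * 5 ^ 2
  | 2, 2 => 5 ^ 5
  | 3, 1 => 9 * 5
  | 3, 2 => 9 * 5 ^ 4
  | 3, 3 => 5 ^ 7
  | 4, 1 => 2 * 5
  | 4, 2 => 44 * 5 ^ 3
  | 4, 3 => 14 * 5 ^ 6
  | 4, 4 => 5 ^ 9
  | i + 5, j + 1 =>
      25 * mMat (i + 4) j + 25 * mMat (i + 3) j + 15 * mMat (i + 2) j +
        5 * mMat (i + 1) j + mMat i j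
  | _, _ => 0
  termination_by i j => (j, i)

/-- `a_{i,j} = m_{6i, i+j}`. -/
def aMat (i j : ℕ) : ℤ := mMat (6 * i) (i + j)

/-- `b_{i,j} = m_{6i+1, i+j}`. -/
def bMat (i j : ℕ) : ℤ := mMat (6 * i + 1) (i + j)

/-- The vectors `x_a = (x_{a,i})_{i≥0}`: `x₁ = (−5, 5⁴, 0, 0, …)`, and for `a ≥ 1`,
`x_{a+1} = x_a·A` if `a` is odd and `x_{a+1} = x_a·B` if `a` is even
(the sums over `i ≥ 0` have finite support; `∑ᶠ` is the finite sum). -/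
noncomputable def xVec : ℕ → ℕ → ℤ
  | 0, _ => 0
  | 1, i => if i = 0 then -5 else if i = 1 then 5 ^ 4 else 0
  | a + 2, j =>
      if a % 2 = 0 then ∑ᶠ i, xVec (a + 1) i * aMat i j
      else ∑ᶠ i, xVec (a + 1) i * bMat i j

/-! ### Manually derived equations for `mMat` -/

lemma mMat_rec (i j : ℕ) : mMat (i + 5) (j + 1) =
    25 * mMat (i + 4) j + 25 * mMat (i + 3) j + 15 * mMat (i + 2) j +
      5 * mMat (i + 1) j + mMat i j := by
  delta mMat; delta mMat._unary; rw [WellFounded.fix_eq]; try rfl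

lemma mMat00 : mMat 0 0 = 1 := by delta mMat; delta mMat._unary; rw [WellFounded.fix_eq]; try rfl
lemma mMat11 : mMat 1 1 = 5 ^ 3 := by delta mMat; delta mMat._unary; rw [WellFounded.fix_eq]; try rfl
lemma mMat21 : mMat 2 1 = 4 * 5 ^ 2 := by delta mMat; delta mMat._unary; rw [WellFounded.fix_eq]; try rfl
lemma mMat22 : mMat 2 2 = 5 ^ 5 := by delta mMat; delta mMat._unary; rw [WellFounded.fix_eq]; try rfl
lemma mMat31 : mMat 3 1 = 9 * 5 := by delta mMat; delta mMat._unary; rw [WellFounded.fix_eq]; try rfl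
lemma mMat32 : mMat 3 2 = 9 * 5 ^ 4 := by delta mMat; delta mMat._unary; rw [WellFounded.fix_eq]; try rfl
lemma mMat33 : mMat 3 3 = 5 ^ 7 := by delta mMat; delta mMat._unary; rw [WellFounded.fix_eq]; try rfl
lemma mMat41 : mMat 4 1 = 2 * 5 := by delta mMat; delta mMat._unary; rw [WellFounded.fix_eq]; try rfl
lemma mMat42 : mMat 4 2 = 44 * 5 ^ 3 := by delta mMat; delta mMat._unary; rw [WellFounded.fix_eq]; try rfl
lemma mMat43 : mMat 4 3 = 14 * 5 ^ 6 := by delta mMat; delta mMat._unary; rw [WellFounded.fix_eq]; try rfl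
lemma mMat44 : mMat 4 4 = 5 ^ 9 := by delta mMat; delta mMat._unary; rw [WellFounded.fix_eq]; try rfl

lemma mMat10 : mMat 1 0 = 0 := by delta mMat; delta mMat._unary; rw [WellFounded.fix_eq]; try rfl
lemma mMat20 : mMat 2 0 = 0 := by delta mMat; delta mMat._unary; rw [WellFounded.fix_eq]; try rfl
lemma mMat30 : mMat 3 0 = 0 := by delta mMat; delta mMat._unary; rw [WellFounded.fix_eq]; try rfl
lemma mMat40 : mMat 4 0 = 0 := by delta mMat; delta mMat._unary; rw [WellFounded.fix_eq]; try rfl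
lemma mMat50 (k : ℕ) : mMat (k + 5) 0 = 0 := by
  delta mMat; delta mMat._unary; rw [WellFounded.fix_eq]; try rfl
lemma mMat0s (l : ℕ) : mMat 0 (l + 1) = 0 := by
  delta mMat; delta mMat._unary; rw [WellFounded.fix_eq]; try rfl
lemma mMat1s (l : ℕ) : mMat 1 (l + 2) = 0 := by
  delta mMat; delta mMat._unary; rw [WellFounded.fix_eq]; try rfl
lemma mMat2s (l : ℕ) : mMat 2 (l + 3) = 0 := by
  delta mMat; delta mMat._unary; rw [WellFounded.fix_eq]; try rfl
lemma mMat3s (l : ℕ) : mMat 3 (l + 4) = 0 := by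
  delta mMat; delta mMat._unary; rw [WellFounded.fix_eq]; try rfl
lemma mMat4s (l : ℕ) : mMat 4 (l + 5) = 0 := by
  delta mMat; delta mMat._unary; rw [WellFounded.fix_eq]; try rfl

/-! ### Support lemmas -/

/-- `mMat i j = 0` when `i > 5j`. -/
lemma mMat_zero_low : ∀ j i : ℕ, 5 * j < i → mMat i j = 0 := by
  intro j
  induction j with
  | zero =>
    intro i hi
    match i, hi with
    | 1, _ => exact mMat10
    | 2, _ => exact mMat20
    | 3, _ => exact mMat30
    | 4, _ => exact mMat40
    | k + 5, _ => exact mMat50 k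
  | succ j IH =>
    intro i hi
    match i, hi with
    | k + 5, hi =>
      rw [mMat_rec, IH (k + 4) (by omega), IH (k + 3) (by omega), IH (k + 2) (by omega),
        IH (k + 1) (by omega), IH k (by omega)]
      ring
    | 1, hi => omega
    | 2, hi => omega
    | 3, hi => omega
    | 4, hi => omega

/-- `mMat i j = 0` when `j > i`. -/
lemma mMat_zero_high : ∀ j i : ℕ, i < j → mMat i j = 0 := by
  intro j
  induction j with
  | zero => intro i hi; omega
  | succ j IH =>
    intro i hi
    match i, hi with
    | 0, _ => exact mMat0s j
    | 1, hi =>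
      obtain ⟨l, rfl⟩ : ∃ l, j = l + 1 := ⟨j - 1, by omega⟩
      exact mMat1s l
    | 2, hi =>
      obtain ⟨l, rfl⟩ : ∃ l, j = l + 2 := ⟨j - 2, by omega⟩
      exact mMat2s l
    | 3, hi =>
      obtain ⟨l, rfl⟩ : ∃ l, j = l + 3 := ⟨j - 3, by omega⟩
      exact mMat3s l
    | 4, hi =>
      obtain ⟨l, rfl⟩ : ∃ l, j = l + 4 := ⟨j - 4, by omega⟩
      exact mMat4s l
    | k + 5, hi =>
      rw [mMat_rec, IH (k + 4) (by omega), IH (k + 3) (by omega), IH (k + 2) (by omega),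
        IH (k + 1) (by omega), IH k (by omega)]
      ring

/-! ### Valuation lemma for `mMat` -/

lemma pow_dvd_helper {x : ℤ} {f e a : ℕ} (c : ℤ) (hx : (5 : ℤ) ^ f ∣ x) (he : e ≤ a + f) :
    (5 : ℤ) ^ e ∣ 5 ^ a * c * x := by
  refine (pow_dvd_pow 5 he).trans ?_
  rw [pow_add]
  exact mul_dvd_mul (dvd_mul_right _ c) hx

lemma mMat_dvd : ∀ j i : ℕ, (5 : ℤ) ^ ((5 * j - i) / 2) ∣ mMat i j := by
  intro j
  induction j with
  | zero =>
    intro i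
    simp
  | succ j IH =>
    intro i
    match i with
    | 0 => rw [mMat0s j]; exact dvd_zero _
    | 1 =>
      match j with
      | 0 => rw [mMat11]; exact pow_dvd_pow 5 (by norm_num)
      | l + 1 => rw [mMat1s l]; exact dvd_zero _
    | 2 =>
      match j with
      | 0 =>
        rw [mMat21]
        norm_num
      | 1 => rw [mMat22]; exact pow_dvd_pow 5 (by norm_num)
      | l + 2 => rw [mMat2s l]; exact dvd_zero _
    | 3 =>
      match j with
      | 0 => rw [mMat31]; norm_num
      | 1 => rw [mMat32]; norm_num
      | 2 => rw [mMat33]; exact pow_dvd_pow 5 (by norm_num)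
      | l + 3 => rw [mMat3s l]; exact dvd_zero _
    | 4 =>
      match j with
      | 0 => rw [mMat41]; norm_num
      | 1 => rw [mMat42]; norm_num
      | 2 => rw [mMat43]; norm_num
      | 3 => rw [mMat44]; exact pow_dvd_pow 5 (by norm_num)
      | l + 4 => rw [mMat4s l]; exact dvd_zero _
    | k + 5 =>
      rw [mMat_rec]
      have h4 : (5 : ℤ) ^ ((5 * (j + 1) - (k + 5)) / 2) ∣ 5 ^ 2 * 1 * mMat (k + 4) j :=
        pow_dvd_helper 1 (IH (k + 4)) (by omega)
      have h3 : (5 : ℤ) ^ ((5 * (j + 1) - (k + 5)) / 2) ∣ 5 ^ 2 * 1 * mMat (k + 3) j :=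
        pow_dvd_helper 1 (IH (k + 3)) (by omega)
      have h2 : (5 : ℤ) ^ ((5 * (j + 1) - (k + 5)) / 2) ∣ 5 ^ 1 * 3 * mMat (k + 2) j :=
        pow_dvd_helper 3 (IH (k + 2)) (by omega)
      have h1 : (5 : ℤ) ^ ((5 * (j + 1) - (k + 5)) / 2) ∣ 5 ^ 1 * 1 * mMat (k + 1) j :=
        pow_dvd_helper 1 (IH (k + 1)) (by omega)
      have h0 : (5 : ℤ) ^ ((5 * (j + 1) - (k + 5)) / 2) ∣ 5 ^ 0 * 1 * mMat k j :=
        pow_dvd_helper 1 (IH k) (by omega)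
      have := dvd_add (dvd_add (dvd_add (dvd_add h4 h3) h2) h1) h0
      convert this using 1
      · rfl
      · ring

/-! ### Valuation and support for `aMat`, `bMat` -/

lemma aMat_dvd (i j : ℕ) : (5 : ℤ) ^ ((5 * j - i) / 2) ∣ aMat i j := by
  have h : (5 * (i + j) - 6 * i) / 2 = (5 * j - i) / 2 := by omega
  have := mMat_dvd (i + j) (6 * i)
  rw [h] at this
  exact this

lemma bMat_dvd (i j : ℕ) : (5 : ℤ) ^ ((5 * j - i - 1) / 2) ∣ bMat i j := by
  have h : (5 * (i + j) - (6 * i + 1)) / 2 = (5 * j - i - 1) / 2 := by omega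
  have := mMat_dvd (i + j) (6 * i + 1)
  rw [h] at this
  exact this

lemma aMat_zero {i j : ℕ} (h : 5 * j < i) : aMat i j = 0 :=
  mMat_zero_low (i + j) (6 * i) (by omega)

lemma bMat_zero {i j : ℕ} (h : 5 * j ≤ i) : bMat i j = 0 :=
  mMat_zero_low (i + j) (6 * i + 1) (by omega)

lemma aMat_zero_col0 (i : ℕ) (hi : 1 ≤ i) : aMat i 0 = 0 := aMat_zero (by omega)

lemma bMat_zero_col0 (i : ℕ) : bMat i 0 = 0 := bMat_zero (by omega)

lemma aMat00 : aMat 0 0 = 1 := by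
  show mMat 0 0 = 1; exact mMat00

lemma aMat0 (j : ℕ) (hj : 1 ≤ j) : aMat 0 j = 0 := by
  show mMat 0 (0 + j) = 0
  obtain ⟨l, rfl⟩ : ∃ l, j = l + 1 := ⟨j - 1, by omega⟩
  simpa using mMat0s l

lemma bMat0 (j : ℕ) : bMat 0 j = if j = 1 then 5 ^ 3 else 0 := by
  show mMat 1 (0 + j) = _
  match j with
  | 0 => simpa using mMat10
  | 1 => simpa using mMat11
  | l + 2 => simpa using mMat1s l

/-! ### Concrete values needed for the refined row-7 estimates -/

lemma mMat51 : mMat 5 1 = 1 := by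
  have := mMat_rec 0 0
  rw [mMat40, mMat30, mMat20, mMat10, mMat00] at this
  simpa using this

lemma mMat61 : mMat 6 1 = 0 := mMat_zero_low 1 6 (by norm_num)

lemma mMat72 : mMat 7 2 = 500 := by
  have := mMat_rec 2 1
  rw [mMat61, mMat51, mMat41, mMat31, mMat21] at this
  norm_num at this
  convert this using 2

lemma mMat52 : mMat 5 2 = 3500 := by
  have := mMat_rec 0 1
  rw [mMat41, mMat31, mMat21, mMat11, mMat0s 0] at this
  norm_num at this
  convert this using 2

lemma mMat53 : mMat 5 3 = 325000 := by
  have := mMat_rec 0 2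
  rw [mMat42, mMat32, mMat22, mMat1s 0, mMat0s 1] at this
  norm_num at this
  convert this using 2

lemma mMat63 : mMat 6 3 = 325000 := by
  have := mMat_rec 1 2
  rw [mMat52, mMat42, mMat32, mMat22, mMat1s 0] at this
  norm_num at this
  convert this using 2

lemma mMat74 : mMat 7 4 = 19921875 := by
  have := mMat_rec 2 3
  rw [mMat63, mMat53, mMat43, mMat33, mMat2s 0] at this
  norm_num at this
  convert this using 2

lemma mMat54 : mMat 5 4 = 7421875 := by
  have := mMat_rec 0 3
  rw [mMat43, mMat33, mMat2s 0, mMat1s 1, mMat0s 2] at this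
  norm_num at this
  convert this using 2

lemma mMat55 : mMat 5 5 = 48828125 := by
  have := mMat_rec 0 4
  rw [mMat44, mMat3s 0, mMat2s 1, mMat1s 2, mMat0s 3] at this
  norm_num at this
  convert this using 2

lemma mMat65 : mMat 6 5 = 234375000 := by
  have := mMat_rec 1 4
  rw [mMat54, mMat44, mMat3s 0, mMat2s 1, mMat1s 2] at this
  norm_num at this
  convert this using 2

lemma mMat76 : mMat 7 6 = 7080078125 := by
  have := mMat_rec 2 5
  rw [mMat65, mMat55, mMat4s 0, mMat3s 1, mMat2s 2] at this
  norm_num at this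
  convert this using 2

/-- Refined estimate for row `i = 1` of `B`. -/
lemma bMat1_dvd (j : ℕ) (hj : 1 ≤ j) : (5 : ℤ) ^ (3 + (5 * j - 7) / 2) ∣ bMat 1 j := by
  match j, hj with
  | 1, _ => show (5:ℤ)^(3 + 0) ∣ mMat 7 2; rw [mMat72]; norm_num
  | 2, _ =>
    refine (pow_dvd_pow 5 (by norm_num : 3 + (5*2-7)/2 ≤ (5*2-1-1)/2)).trans (bMat_dvd 1 2)
  | 3, _ => show (5:ℤ)^(3 + 4) ∣ mMat 7 4; rw [mMat74]; norm_num
  | 4, _ =>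
    refine (pow_dvd_pow 5 (by norm_num : 3 + (5*4-7)/2 ≤ (5*4-1-1)/2)).trans (bMat_dvd 1 4)
  | 5, _ => show (5:ℤ)^(3 + 9) ∣ mMat 7 6; rw [mMat76]; norm_num
  | 6, _ =>
    refine (pow_dvd_pow 5 (by norm_num : 3 + (5*6-7)/2 ≤ (5*6-1-1)/2)).trans (bMat_dvd 1 6)
  | (l + 7), _ => show _ ∣ mMat 7 (1 + (l + 7)); rw [mMat_zero_high _ 7 (by omega)]; exact dvd_zero _

/-! ### Generic sum manipulation -/

lemma finsum_mul_aMat (x : ℕ → ℤ) (j : ℕ) :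
    ∑ᶠ i, x i * aMat i j = ∑ i ∈ Finset.range (5 * j + 1), x i * aMat i j := by
  apply finsum_eq_sum_of_support_subset
  intro i hi
  simp only [Function.mem_support, ne_eq] at hi
  simp only [Finset.coe_range, Set.mem_Iio]
  by_contra h
  exact hi (by rw [aMat_zero (by omega)]; ring)

lemma finsum_mul_bMat (x : ℕ → ℤ) (j : ℕ) :
    ∑ᶠ i, x i * bMat i j = ∑ i ∈ Finset.range (5 * j + 1), x i * bMat i j := by
  apply finsum_eq_sum_of_support_subset
  intro i hi
  simp only [Function.mem_support, ne_eq] at hi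
  simp only [Finset.coe_range, Set.mem_Iio]
  by_contra h
  exact hi (by rw [bMat_zero (by omega)]; ring)

lemma dvd_mul_of_dvd_dvd {x y : ℤ} {p q T : ℕ} (hx : (5 : ℤ) ^ p ∣ x) (hy : (5 : ℤ) ^ q ∣ y)
    (h : T ≤ p + q) : (5 : ℤ) ^ T ∣ x * y :=
  (pow_dvd_pow 5 h).trans (by rw [pow_add]; exact mul_dvd_mul hx hy)

/-! ### Step lemmas -/

/-- Multiplication by `A`, generic step. -/
lemma stepA (x : ℕ → ℤ) (E : ℕ) (h0 : x 0 = 0)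
    (h : ∀ i, 1 ≤ i → (5 : ℤ) ^ (E + (5 * i - 7) / 2) ∣ x i) :
    (∑ᶠ i, x i * aMat i 0) = 0 ∧
      ∀ j, 1 ≤ j → (5 : ℤ) ^ (E + 2 + (5 * j - 5) / 2) ∣ ∑ᶠ i, x i * aMat i j := by
  constructor
  · apply finsum_eq_zero_of_forall_eq_zero
    intro i
    match i with
    | 0 => rw [h0]; ring
    | i + 1 => rw [aMat_zero_col0 (i + 1) (by omega)]; ring
  · intro j hj
    rw [finsum_mul_aMat]
    apply Finset.dvd_sum
    intro i hi
    simp only [Finset.mem_range] at hi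
    match i with
    | 0 => rw [h0]; simp
    | i + 1 =>
      exact dvd_mul_of_dvd_dvd (h (i + 1) (by omega)) (aMat_dvd (i + 1) j) (by omega)

/-- Multiplication by `B`, generic step (uses the refined row-1 estimate). -/
lemma stepB (x : ℕ → ℤ) (E : ℕ) (h0 : x 0 = 0)
    (h : ∀ i, 1 ≤ i → (5 : ℤ) ^ (E + (5 * i - 5) / 2) ∣ x i) :
    (∑ᶠ i, x i * bMat i 0) = 0 ∧
      ∀ j, 1 ≤ j → (5 : ℤ) ^ (E + 3 + (5 * j - 7) / 2) ∣ ∑ᶠ i, x i * bMat i j := by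
  constructor
  · apply finsum_eq_zero_of_forall_eq_zero
    intro i
    rw [bMat_zero_col0 i]; ring
  · intro j hj
    rw [finsum_mul_bMat]
    apply Finset.dvd_sum
    intro i hi
    simp only [Finset.mem_range] at hi
    match i with
    | 0 => rw [h0]; simp
    | 1 =>
      have h1 : (5 : ℤ) ^ E ∣ x 1 := by simpa using h 1 le_rfl
      exact dvd_mul_of_dvd_dvd h1 (bMat1_dvd j hj) (by omega)
    | i + 2 =>
      exact dvd_mul_of_dvd_dvd (h (i + 2) (by omega)) (bMat_dvd (i + 2) j) (by omega)

/-! ### The vectors `x₂`, `x₃`, `x₄` -/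

lemma xVec2 (j : ℕ) : xVec 2 j = -5 * aMat 0 j + 5 ^ 4 * aMat 1 j := by
  have : xVec 2 j = ∑ᶠ i, xVec 1 i * aMat i j := by
    show xVec (0 + 2) j = _
    rw [xVec]
    simp
  rw [this]
  have hsub : (Function.support fun i => xVec 1 i * aMat i j) ⊆ ({0, 1} : Finset ℕ) := by
    intro i hi
    simp only [Function.mem_support, ne_eq] at hi
    simp only [Finset.coe_insert, Finset.coe_singleton, Set.mem_insert_iff, Set.mem_singleton_iff]
    by_contra hc
    push_neg at hc
    apply hi
    have : xVec 1 i = 0 := by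
      rw [xVec]
      simp [hc.1, hc.2]
    rw [this]; ring
  rw [finsum_eq_sum_of_support_subset _ hsub]
  rw [Finset.sum_insert (by norm_num), Finset.sum_singleton]
  have h0 : xVec 1 0 = -5 := by rw [xVec]; simp
  have h1 : xVec 1 1 = 5 ^ 4 := by rw [xVec]; simp
  rw [h0, h1]

lemma xVec2_zero : xVec 2 0 = -5 := by
  rw [xVec2, aMat00, aMat_zero (i := 1) (j := 0) (by norm_num)]
  ring

lemma xVec2_dvd (i : ℕ) (hi : 1 ≤ i) : (5 : ℤ) ^ (4 + (5 * i - 1) / 2) ∣ xVec 2 i := by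
  rw [xVec2, aMat0 i hi]
  have h1 : (5 : ℤ) ^ ((5 * i - 1) / 2) ∣ aMat 1 i := aMat_dvd 1 i
  have : (5 : ℤ) ^ (4 + (5 * i - 1) / 2) ∣ 5 ^ 4 * aMat 1 i := by
    rw [pow_add]
    exact mul_dvd_mul_left _ h1
  simpa using this

lemma xVec3 (j : ℕ) : xVec 3 j = ∑ᶠ i, xVec 2 i * bMat i j := by
  show xVec (1 + 2) j = _
  rw [xVec]
  norm_num

lemma xVec3_zero : xVec 3 0 = 0 := by
  rw [xVec3]
  apply finsum_eq_zero_of_forall_eq_zero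
  intro i
  rw [bMat_zero_col0 i]; ring

lemma xVec3_dvd (j : ℕ) (hj : 1 ≤ j) : (5 : ℤ) ^ (4 + (5 * j - 7) / 2) ∣ xVec 3 j := by
  rw [xVec3, finsum_mul_bMat]
  apply Finset.dvd_sum
  intro i hi
  simp only [Finset.mem_range] at hi
  match i with
  | 0 =>
    rw [xVec2_zero, bMat0 j]
    by_cases h : j = 1
    · subst h
      norm_num
    · rw [if_neg h]; simp
  | i + 1 =>
    exact dvd_mul_of_dvd_dvd (xVec2_dvd (i + 1) (by omega)) (bMat_dvd (i + 1) j) (by omega)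

/-! ### Main induction -/

lemma xVec_odd_step (c : ℕ) (j : ℕ) :
    xVec (2 * c + 4) j = ∑ᶠ i, xVec (2 * c + 3) i * aMat i j := by
  have h : 2 * c + 4 = (2 * c + 2) + 2 := by ring
  rw [h, xVec]
  have : (2 * c + 2) % 2 = 0 := by omega
  rw [if_pos this]

lemma xVec_even_step (c : ℕ) (j : ℕ) :
    xVec (2 * c + 5) j = ∑ᶠ i, xVec (2 * c + 4) i * bMat i j := by
  have h : 2 * c + 5 = (2 * c + 3) + 2 := by ring
  rw [h, xVec]
  have : (2 * c + 3) % 2 = 1 := by omega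
  rw [if_neg (by omega)]

lemma main_induction (c : ℕ) :
    xVec (2 * c + 3) 0 = 0 ∧
      (∀ j, 1 ≤ j → (5 : ℤ) ^ (5 * c + 4 + (5 * j - 7) / 2) ∣ xVec (2 * c + 3) j) ∧
      xVec (2 * c + 4) 0 = 0 ∧
      (∀ j, 1 ≤ j → (5 : ℤ) ^ (5 * c + 6 + (5 * j - 5) / 2) ∣ xVec (2 * c + 4) j) := by
  induction c with
  | zero =>
    have hst := stepA (xVec 3) 4 xVec3_zero (fun i hi => xVec3_dvd i hi)
    refine ⟨xVec3_zero, fun j hj => xVec3_dvd j hj, ?_, fun j hj => ?_⟩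
    · show xVec 4 0 = 0
      have h := xVec_odd_step 0 0
      norm_num at h
      rw [h]
      exact hst.1
    · show (5 : ℤ) ^ (6 + (5 * j - 5) / 2) ∣ xVec 4 j
      have h := xVec_odd_step 0 j
      norm_num at h
      rw [h]
      exact hst.2 j hj
  | succ c IH =>
    obtain ⟨-, -, h40, h4⟩ := IH
    have hB := stepB (xVec (2 * c + 4)) (5 * c + 6) h40 (fun i hi => h4 i hi)
    have hodd0 : xVec (2 * (c + 1) + 3) 0 = 0 := by
      rw [show 2 * (c + 1) + 3 = 2 * c + 5 by ring, xVec_even_step c 0]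
      exact hB.1
    have hodd : ∀ j, 1 ≤ j →
        (5 : ℤ) ^ (5 * (c + 1) + 4 + (5 * j - 7) / 2) ∣ xVec (2 * (c + 1) + 3) j := by
      intro j hj
      rw [show 2 * (c + 1) + 3 = 2 * c + 5 by ring, xVec_even_step c j]
      have := hB.2 j hj
      have he : 5 * c + 6 + 3 + (5 * j - 7) / 2 = 5 * (c + 1) + 4 + (5 * j - 7) / 2 := by ring_nf
      rw [he] at this
      exact this
    have hA := stepA (xVec (2 * (c + 1) + 3)) (5 * (c + 1) + 4) hodd0 hodd
    refine ⟨hodd0, hodd, ?_, ?_⟩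
    · rw [show 2 * (c + 1) + 4 = 2 * (c + 1) + 4 from rfl, xVec_odd_step (c + 1) 0]
      exact hA.1
    · intro j hj
      rw [xVec_odd_step (c + 1) j]
      have := hA.2 j hj
      have he : 5 * (c + 1) + 4 + 2 + (5 * j - 5) / 2 = 5 * (c + 1) + 6 + (5 * j - 5) / 2 := by
        ring_nf
      rw [he] at this
      exact this

/-- Lemma 3.8: for `b ≥ 2` and `j ≥ 1`,
`5^(5b − 6 + max(0, ⌊(5j−7)/2⌋))` divides `x_{2b−1,j}` and
`5^(5b − 4 + ⌊(5j−5)/2⌋)` divides `x_{2b,j}`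
(natural-number truncated subtraction/division realizes the `max` with `0`). -/
theorem xVec_five_valuation (b j : ℕ) (hb : 2 ≤ b) (hj : 1 ≤ j) :
    (5 : ℤ) ^ (5 * b - 6 + (5 * j - 7) / 2) ∣ xVec (2 * b - 1) j ∧
    (5 : ℤ) ^ (5 * b - 4 + (5 * j - 5) / 2) ∣ xVec (2 * b) j := by
  obtain ⟨c, rfl⟩ : ∃ c, b = c + 2 := ⟨b - 2, by omega⟩
  obtain ⟨-, h1, -, h2⟩ := main_induction c
  constructor
  · have e1 : 2 * (c + 2) - 1 = 2 * c + 3 := by omega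
    have e2 : 5 * (c + 2) - 6 = 5 * c + 4 := by omega
    rw [e1, e2]
    exact h1 j hj
  · have e1 : 2 * (c + 2) = 2 * c + 4 := by omega
    have e2 : 5 * (c + 2) - 4 = 5 * c + 6 := by omega
    rw [e1, e2]
    exact h2 j hj
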